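/- For the dual update λ_{t+1} = [λ_t + η(y_t − βλ_t)]_+ with 0 < βη < 1/2, for any λ ∈ ℝ^m_{≥0} it holds that ‖λ_{t+1} − λ‖² ≤ ‖λ_t − λ‖² + 2η‖λ_t‖‖y_t‖ − 2η⟨λ, y_t⟩ + ηβ‖λ‖² + 2η²‖y_t‖². -/

import Mathlib

open scoped RealInnerProductSpace

/-- Componentwise positive part (Euclidean projection onto the nonnegative orthant). -/
noncomputable def posPart {m : ℕ} (z : EuclideanSpace ℝ (Fin m)) :
    EuclideanSpace ℝ (Fin m) := WithLp.toLp 2 (fun i => max (z i) 0)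

lemma posPart_nonexpansive {m : ℕ} (z l : EuclideanSpace ℝ (Fin m))
    (hl : ∀ i, 0 ≤ l i) : ‖posPart z - l‖ ≤ ‖z - l‖ := by
  rw [EuclideanSpace.norm_eq, EuclideanSpace.norm_eq]
  apply Real.sqrt_le_sqrt
  apply Finset.sum_le_sum
  intro i _
  have hli := hl i
  show ‖max (z i) 0 - l i‖ ^ 2 ≤ ‖z i - l i‖ ^ 2
  rw [Real.norm_eq_abs, Real.norm_eq_abs, sq_abs, sq_abs]
  rcases le_or_gt 0 (z i) with h | h
  · rw [max_eq_left h]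
  · rw [max_eq_right h.le]
    nlinarith [sq_nonneg (z i)]

theorem dual_update_one_step
    {m : ℕ} (lam y l : EuclideanSpace ℝ (Fin m)) (η β : ℝ)
    (hη : 0 < η) (hβ : 0 < β) (hβη : β * η < 1 / 2)
    (hlam : ∀ i, 0 ≤ lam i) (hl : ∀ i, 0 ≤ l i) :
    ‖posPart (lam + η • (y - β • lam)) - l‖ ^ 2 ≤
      ‖lam - l‖ ^ 2 + 2 * η * ‖lam‖ * ‖y‖ - 2 * η * ⟪l, y⟫
        + η * β * ‖l‖ ^ 2 + 2 * η ^ 2 * ‖y‖ ^ 2 := by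
  have hne : ‖posPart (lam + η • (y - β • lam)) - l‖ ≤ ‖lam + η • (y - β • lam) - l‖ :=
    posPart_nonexpansive _ _ hl
  have h1 : ‖posPart (lam + η • (y - β • lam)) - l‖ ^ 2 ≤ ‖lam + η • (y - β • lam) - l‖ ^ 2 := by
    apply pow_le_pow_left₀ (norm_nonneg _) hne
  refine h1.trans ?_
  have hre : lam + η • (y - β • lam) - l = (lam - l) + η • (y - β • lam) := by
    abel
  rw [hre, norm_add_sq_real]
  have hip : ⟪lam - l, η • (y - β • lam)⟫ =
      η * (⟪lam, y⟫ - β * ‖lam‖ ^ 2 - ⟪l, y⟫ + β * ⟪l, lam⟫) := by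
    rw [inner_smul_right]
    rw [inner_sub_left, inner_sub_right, inner_sub_right, inner_smul_right, inner_smul_right,
      real_inner_self_eq_norm_sq]
    ring
  have hsm : ‖η • (y - β • lam)‖ = η * ‖y - β • lam‖ := by
    rw [norm_smul, Real.norm_eq_abs, abs_of_pos hη]
  have htri : ‖y - β • lam‖ ≤ ‖y‖ + β * ‖lam‖ := by
    refine (norm_sub_le _ _).trans ?_
    rw [norm_smul, Real.norm_eq_abs, abs_of_pos hβ]
  have hcs1 : ⟪lam, y⟫ ≤ ‖lam‖ * ‖y‖ := real_inner_le_norm _ _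
  have hcs2 : ⟪l, lam⟫ ≤ ‖l‖ * ‖lam‖ := real_inner_le_norm _ _
  have hn1 : 0 ≤ ‖lam‖ := norm_nonneg _
  have hn2 : 0 ≤ ‖l‖ := norm_nonneg _
  have hn3 : 0 ≤ ‖y‖ := norm_nonneg _
  have hn4 : 0 ≤ ‖y - β • lam‖ := norm_nonneg _
  have hsq : ‖η • (y - β • lam)‖ ^ 2 ≤ η ^ 2 * (‖y‖ + β * ‖lam‖) ^ 2 := by
    rw [hsm, mul_pow]
    exact mul_le_mul_of_nonneg_left (pow_le_pow_left₀ hn4 htri 2) (by positivity)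
  rw [hip]
  nlinarith [sq_nonneg (‖y‖ - β * ‖lam‖), sq_nonneg (‖l‖ - ‖lam‖),
    mul_pos hη hβ, sq_nonneg ‖lam‖,
    mul_le_mul_of_nonneg_left hβη.le (le_of_lt (mul_pos (mul_pos hη hβ) (mul_pos hη hβ))),
    mul_le_mul_of_nonneg_left hcs1 (le_of_lt hη),
    mul_le_mul_of_nonneg_left hcs2 (le_of_lt (mul_pos hη hβ)),
    mul_nonneg (mul_nonneg hη.le hβ.le) (sq_nonneg ‖lam‖),
    mul_le_mul_of_nonneg_left (sq_nonneg (‖lam‖)) (mul_pos hη hβ).le]
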